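/- Let k ≥ 2 be an integer. A finite tree T admits a k-community structure if and only if T contains a matching of size k. Moreover, when it exists, a connected k-community structure of T exists. -/

import Mathlib

/-- The set of neighbours of `v` lying in `C`. -/
def nbrsIn {V : Type*} [DecidableEq V] (G : SimpleGraph V) [DecidableRel G.Adj]
    (C : Finset V) (v : V) : Finset V :=
  C.filter (fun w => G.Adj v w)

/-- A `k`-community structure of `G`: a partition into `k` sets of size at least 2
satisfying the proportionality condition. -/
def IsKComm {V : Type*} [Fintype V] [DecidableEq V] (G : SimpleGraph V) [DecidableRel G.Adj]
    {k : ℕ} (C : Fin k → Finset V) : Prop :=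
  (∀ i, 2 ≤ (C i).card) ∧
  (∀ i j, i ≠ j → Disjoint (C i) (C j)) ∧
  (∀ v : V, ∃ i, v ∈ C i) ∧
  (∀ i j, i ≠ j → ∀ v ∈ C i,
    (nbrsIn G (C j) v).card * ((C i).card - 1) ≤ (nbrsIn G (C i) v).card * (C j).card)

/-- `G` has a matching of size `k`: a set of `k` pairwise disjoint edges of `G`. -/
def HasMatchingOfSize {V : Type*} (G : SimpleGraph V) (k : ℕ) : Prop :=
  ∃ M : Finset (Sym2 V), M.card = k ∧ (∀ e ∈ M, e ∈ G.edgeSet) ∧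
    ∀ e ∈ M, ∀ f ∈ M, e ≠ f → ∀ x : V, x ∈ e → x ∉ f

open Finset SimpleGraph

section Reach

variable {V : Type*} (G : SimpleGraph V)

/-- Reachability within a finite vertex set. -/
def ReachIn (C : Finset V) (x y : V) : Prop :=
  ∃ w : G.Walk x y, ∀ v ∈ w.support, v ∈ C

variable {G} {C D : Finset V} {x y z : V}

lemma reachIn_refl (hx : x ∈ C) : ReachIn G C x x :=
  ⟨Walk.nil, by simp [hx]⟩

lemma ReachIn.mem_left (h : ReachIn G C x y) : x ∈ C :=
  h.choose_spec _ h.choose.start_mem_support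

lemma ReachIn.mem_right (h : ReachIn G C x y) : y ∈ C :=
  h.choose_spec _ h.choose.end_mem_support

lemma ReachIn.symm (h : ReachIn G C x y) : ReachIn G C y x := by
  obtain ⟨w, hw⟩ := h
  exact ⟨w.reverse, by
    intro v hv
    rw [Walk.support_reverse] at hv
    exact hw v (List.mem_reverse.mp hv)⟩

lemma ReachIn.trans (h1 : ReachIn G C x y) (h2 : ReachIn G C y z) : ReachIn G C x z := by
  obtain ⟨w1, hw1⟩ := h1
  obtain ⟨w2, hw2⟩ := h2
  refine ⟨w1.append w2, ?_⟩
  intro v hv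
  rw [Walk.mem_support_append_iff] at hv
  exact hv.elim (hw1 v) (hw2 v)

lemma ReachIn.mono (hCD : C ⊆ D) (h : ReachIn G C x y) : ReachIn G D x y := by
  obtain ⟨w, hw⟩ := h
  exact ⟨w, fun v hv => hCD (hw v hv)⟩

lemma reachIn_adj (h : G.Adj x y) (hx : x ∈ C) (hy : y ∈ C) : ReachIn G C x y :=
  ⟨h.toWalk, by simp [hx, hy]⟩

lemma reachIn_of_walk_support {w : G.Walk x y} (hw : ∀ v ∈ w.support, v ∈ C) :
    ∀ z ∈ w.support, ReachIn G C x z := by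
  induction w with
  | nil =>
    intro z hz
    simp only [Walk.support_nil, List.mem_singleton] at hz
    subst hz; exact reachIn_refl (hw _ (by simp))
  | @cons a b c h p ih =>
    intro z hz
    rw [Walk.support_cons, List.mem_cons] at hz
    rcases hz with rfl | hz
    · exact reachIn_refl (hw _ (by simp))
    · have hsub : ∀ v ∈ p.support, v ∈ C := fun v hv => hw v (by simp [Walk.support_cons, hv])
      have h1 : ReachIn G C a b :=
        reachIn_adj h (hw _ (by simp)) (hsub _ p.start_mem_support)
      exact h1.trans (ih hsub z hz)

lemma induce_connected_of_reachIn (hne : C.Nonempty)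
    (h : ∀ x ∈ C, ∀ y ∈ C, ReachIn G C x y) : (G.induce (C : Set V)).Connected := by
  have key : ∀ {a b : V} (w : G.Walk a b) (hw : ∀ v ∈ w.support, v ∈ C),
      (G.induce (C : Set V)).Reachable ⟨a, hw a w.start_mem_support⟩
        ⟨b, hw b w.end_mem_support⟩ := by
    intro a b w
    induction w with
    | nil => intro hw; exact Reachable.refl _
    | @cons a b c hadj p ih =>
      intro hw
      have hsub : ∀ v ∈ p.support, v ∈ C := fun v hv => hw v (by simp [Walk.support_cons, hv])
      have h1 : (G.induce (C : Set V)).Adj ⟨a, hw a (by simp)⟩ ⟨b, hsub b p.start_mem_support⟩ := by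
        simp only [comap_adj, Function.Embedding.coe_subtype]
        exact hadj
      exact (h1.reachable).trans (ih hsub)
  rw [connected_iff]
  refine ⟨?_, ⟨⟨hne.choose, hne.choose_spec⟩⟩⟩
  rintro ⟨a, ha⟩ ⟨b, hb⟩
  obtain ⟨w, hw⟩ := h a ha b hb
  exact key w hw

end Reach

section FirstW

variable {V : Type*} [DecidableEq V]

open Classical in
/-- Starting from `v`, walk toward `r` (decreasing distance) until a vertex of `W` is hit. -/
noncomputable def firstW (G : SimpleGraph V) (W : Finset V) (r : V) (v : V) : V :=
  if v ∈ W then v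
  else if h : ∃ u, G.Adj v u ∧ G.dist u r + 1 = G.dist v r then
    firstW G W r h.choose
  else v
termination_by G.dist v r
decreasing_by
  have := h.choose_spec.2
  omega

lemma firstW_of_mem {G : SimpleGraph V} {W : Finset V} {r v : V} (hv : v ∈ W) :
    firstW G W r v = v := by
  rw [firstW]
  simp [hv]

lemma firstW_of_not_mem {G : SimpleGraph V} {W : Finset V} {r v : V} (hv : v ∉ W)
    (h : ∃ u, G.Adj v u ∧ G.dist u r + 1 = G.dist v r) :
    firstW G W r v = firstW G W r h.choose := by
  classical
  rw [firstW]
  rw [if_neg hv, dif_pos h]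

omit [DecidableEq V] in
lemma exists_adj_dist_lt {G : SimpleGraph V} (hconn : G.Connected) {v r : V} (hne : v ≠ r) :
    ∃ u, G.Adj v u ∧ G.dist u r + 1 = G.dist v r := by
  have hd : G.dist v r ≠ 0 := by
    rw [SimpleGraph.dist_ne_zero_iff_ne_and_reachable]
    exact ⟨hne, hconn v r⟩
  obtain ⟨p, hp⟩ := SimpleGraph.exists_walk_of_dist_ne_zero hd
  cases p with
  | nil => exact absurd rfl hne
  | @cons _ u _ hadj q =>
    refine ⟨u, hadj, ?_⟩
    have h1 : G.dist u r ≤ q.length := SimpleGraph.dist_le q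
    have h2 : q.length + 1 = G.dist v r := by
      simpa [SimpleGraph.Walk.length_cons] using hp
    have h3 : G.dist v r ≤ G.dist u r + 1 := by
      have := SimpleGraph.dist_le (SimpleGraph.Walk.cons hadj
        (hconn u r).exists_walk_length_eq_dist.choose)
      have hl := (hconn u r).exists_walk_length_eq_dist.choose_spec
      simp only [SimpleGraph.Walk.length_cons] at this
      omega
    omega

end FirstW

section Main

variable {V : Type*} [Fintype V] [DecidableEq V]

lemma exists_conn_comm (G : SimpleGraph V) [DecidableRel G.Adj] (htree : G.IsTree)
    {k : ℕ} (hk : 1 ≤ k) (hm : HasMatchingOfSize G k) :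
    ∃ C : Fin k → Finset V, IsKComm G C ∧ ∀ i, (G.induce (↑(C i) : Set V)).Connected := by
  classical
  obtain ⟨hconn, hacyc⟩ := htree
  obtain ⟨M, hMcard, hMedge, hMdisj⟩ := hm
  -- enumerate the matching edges
  let eM : {x // x ∈ M} ≃ Fin k := (M.equivFin).trans (finCongr hMcard)
  let f : Fin k → Sym2 V := fun i => (eM.symm i : Sym2 V)
  have hfM : ∀ i, f i ∈ M := fun i => (eM.symm i).2
  have hfinj : Function.Injective f := by
    intro i j hij
    have h1 : (eM.symm i) = (eM.symm j) := Subtype.ext hij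
    simpa using congrArg eM h1
  have hxy : ∀ i : Fin k, ∃ pr : V × V, f i = s(pr.1, pr.2) := by
    intro i
    obtain ⟨⟨x, y⟩, h⟩ := (f i).exists_rep
    exact ⟨(x, y), h.symm⟩
  choose pr hpr using hxy
  set a : Fin k → V := fun i => (pr i).1 with ha
  set b : Fin k → V := fun i => (pr i).2 with hb
  have hadj : ∀ i, G.Adj (a i) (b i) := by
    intro i
    have h := hMedge (f i) (hfM i)
    rw [hpr i] at h
    exact h
  have hpairdisj : ∀ i j, i ≠ j → ∀ x, x ∈ ({a i, b i} : Finset V) →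
      x ∉ ({a j, b j} : Finset V) := by
    intro i j hij x hxi hxj
    have h1 : x ∈ f i := by
      rw [hpr i, Sym2.mem_iff]
      simpa [Finset.mem_insert, Finset.mem_singleton] using hxi
    have h2 : x ∈ f j := by
      rw [hpr j, Sym2.mem_iff]
      simpa [Finset.mem_insert, Finset.mem_singleton] using hxj
    exact hMdisj (f i) (hfM i) (f j) (hfM j) (fun h => hij (hfinj h)) x h1 h2
  set W : Finset V := univ.biUnion (fun i => {a i, b i}) with hW
  have hWmem : ∀ x, x ∈ W ↔ ∃ i, x ∈ ({a i, b i} : Finset V) := by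
    intro x; simp [hW]
  have hi0 : 0 < k := hk
  set i₀ : Fin k := ⟨0, hi0⟩ with hi₀
  set r : V := a i₀ with hr
  have hrW : r ∈ W := (hWmem r).mpr ⟨i₀, Finset.mem_insert_self _ _⟩
  have haW : ∀ i, a i ∈ W := fun i => (hWmem _).mpr ⟨i, Finset.mem_insert_self _ _⟩
  have hbW : ∀ i, b i ∈ W := fun i => (hWmem _).mpr ⟨i, by simp⟩
  set fw : V → V := firstW G W r with hfw
  have hfw_fix : ∀ x ∈ W, fw x = x := fun x hx => firstW_of_mem hx
  have hfwW : ∀ n v, G.dist v r ≤ n → fw v ∈ W := by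
    intro n
    induction n with
    | zero =>
      intro v hv
      by_cases hvW : v ∈ W
      · rw [hfw_fix v hvW]; exact hvW
      · exfalso
        have hvr : v ≠ r := fun h => hvW (h ▸ hrW)
        have : G.dist v r ≠ 0 := by
          rw [SimpleGraph.dist_ne_zero_iff_ne_and_reachable]
          exact ⟨hvr, hconn v r⟩
        omega
    | succ n ih =>
      intro v hv
      by_cases hvW : v ∈ W
      · rw [hfw_fix v hvW]; exact hvW
      · have hvr : v ≠ r := fun h => hvW (h ▸ hrW)
        have hE := exists_adj_dist_lt hconn hvr
        show firstW G W r v ∈ W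
        rw [firstW_of_not_mem hvW hE]
        exact ih _ (by have := hE.choose_spec.2; omega)
  have hfwW' : ∀ v, fw v ∈ W := fun v => hfwW _ v le_rfl
  set pick : V → Fin k := fun w =>
    if h : ∃ i, w ∈ ({a i, b i} : Finset V) then h.choose else i₀ with hpickdef
  have hpick : ∀ w ∈ W, w ∈ ({a (pick w), b (pick w)} : Finset V) := by
    intro w hw
    obtain hex := (hWmem w).mp hw
    simp only [hpickdef, dif_pos hex]
    exact hex.choose_spec
  have hpick_unique : ∀ w i, w ∈ ({a i, b i} : Finset V) → pick w = i := by
    intro w i hi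
    by_contra hne
    exact hpairdisj _ _ hne w (hpick w ((hWmem w).mpr ⟨i, hi⟩)) hi
  set idx : V → Fin k := fun v => pick (fw v) with hidx
  set P : Fin k → Finset V := fun i => univ.filter (fun v => idx v = i) with hP
  have hmemP : ∀ v i, v ∈ P i ↔ idx v = i := by
    intro v i; simp [hP]
  have hidxa : ∀ i, idx (a i) = i := by
    intro i
    show pick (fw (a i)) = i
    rw [hfw_fix _ (haW i)]
    exact hpick_unique _ _ (Finset.mem_insert_self _ _)
  have hidxb : ∀ i, idx (b i) = i := by
    intro i
    show pick (fw (b i)) = i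
    rw [hfw_fix _ (hbW i)]
    exact hpick_unique _ _ (by simp)
  have hreach : ∀ n v, G.dist v r ≤ n → ReachIn G (P (idx v)) v (fw v) := by
    intro n
    induction n with
    | zero =>
      intro v hv
      by_cases hvW : v ∈ W
      · rw [hfw_fix v hvW]
        exact reachIn_refl ((hmemP v _).mpr rfl)
      · exfalso
        have hvr : v ≠ r := fun h => hvW (h ▸ hrW)
        have : G.dist v r ≠ 0 := by
          rw [SimpleGraph.dist_ne_zero_iff_ne_and_reachable]
          exact ⟨hvr, hconn v r⟩
        omega
    | succ n ih =>
      intro v hv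
      by_cases hvW : v ∈ W
      · rw [hfw_fix v hvW]
        exact reachIn_refl ((hmemP v _).mpr rfl)
      · have hvr : v ≠ r := fun h => hvW (h ▸ hrW)
        have hE := exists_adj_dist_lt hconn hvr
        have hfw_eq : fw v = fw hE.choose := firstW_of_not_mem hvW hE
        have hidx_eq : idx v = idx hE.choose := by
          show pick (fw v) = pick (fw hE.choose)
          rw [hfw_eq]
        have hrec := ih hE.choose (by have := hE.choose_spec.2; omega)
        rw [hfw_eq, hidx_eq]
        refine (reachIn_adj hE.choose_spec.1 ?_ ?_).trans hrec
        · exact (hmemP v _).mpr hidx_eq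
        · exact (hmemP _ _).mpr rfl
  have hreach' : ∀ v, ReachIn G (P (idx v)) v (fw v) := fun v => hreach _ v le_rfl
  -- the family of admissible partitions
  set F : (Fin k → Finset V) → Prop := fun C =>
    (∀ i, 2 ≤ (C i).card) ∧ (∀ i j, i ≠ j → Disjoint (C i) (C j)) ∧
    (∀ v, ∃ i, v ∈ C i) ∧ (∀ i, ∀ x ∈ C i, ∀ y ∈ C i, ReachIn G (C i) x y) with hF
  have haP : ∀ i, a i ∈ P i := fun i => (hmemP _ _).mpr (hidxa i)
  have hbP : ∀ i, b i ∈ P i := fun i => (hmemP _ _).mpr (hidxb i)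
  have hFP : F P := by
    refine ⟨?_, ?_, ?_, ?_⟩
    · intro i
      have hsub : ({a i, b i} : Finset V) ⊆ P i := by
        intro x hx
        rcases Finset.mem_insert.mp hx with rfl | hx
        · exact haP i
        · rw [Finset.mem_singleton] at hx; subst hx; exact hbP i
      calc 2 = ({a i, b i} : Finset V).card := (Finset.card_pair (hadj i).ne).symm
        _ ≤ (P i).card := Finset.card_le_card hsub
    · intro i j hij
      refine Finset.disjoint_left.mpr ?_
      intro x hxi hxj
      exact hij (((hmemP x i).mp hxi).symm.trans ((hmemP x j).mp hxj))
    · intro v; exact ⟨idx v, (hmemP _ _).mpr rfl⟩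
    · intro i x hx y hy
      have hix : idx x = i := (hmemP _ _).mp hx
      have hiy : idx y = i := (hmemP _ _).mp hy
      have h1 : ReachIn G (P i) x (fw x) := hix ▸ hreach' x
      have h2 : ReachIn G (P i) y (fw y) := hiy ▸ hreach' y
      have hWr : ∀ w, w ∈ ({a i, b i} : Finset V) → ReachIn G (P i) w (a i) := by
        intro w hw
        rcases Finset.mem_insert.mp hw with rfl | hw
        · exact reachIn_refl (haP i)
        · rw [Finset.mem_singleton] at hw; subst hw
          exact (reachIn_adj (hadj i) (haP i) (hbP i)).symm
      have hfx : fw x ∈ ({a i, b i} : Finset V) := by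
        have := hpick (fw x) (hfwW' x)
        rwa [show pick (fw x) = i from hix] at this
      have hfy : fw y ∈ ({a i, b i} : Finset V) := by
        have := hpick (fw y) (hfwW' y)
        rwa [show pick (fw y) = i from hiy] at this
      exact ((h1.trans (hWr _ hfx)).trans ((h2.trans (hWr _ hfy)).symm))
  -- choose a partition of minimal potential
  set Fam : Set ℕ := {n | ∃ C, F C ∧ (∑ i, (C i).card ^ 2) = n} with hFam
  have hFamne : Fam.Nonempty := ⟨_, P, hFP, rfl⟩
  obtain ⟨C, hFC, hΦC⟩ := Nat.sInf_mem hFamne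
  have hmin : ∀ C', F C' → ∑ i, (C i).card ^ 2 ≤ ∑ i, (C' i).card ^ 2 := by
    intro C' h
    rw [hΦC]
    exact Nat.sInf_le ⟨C', h, rfl⟩
  obtain ⟨hcard, hdisj, hcover, hconnC⟩ := hFC
  refine ⟨C, ⟨hcard, hdisj, hcover, ?_⟩, fun i =>
    induce_connected_of_reachIn (Finset.card_pos.mp (by have := hcard i; omega)) (hconnC i)⟩
  intro i j hij v hv
  by_cases hNj : (nbrsIn G (C j) v).card = 0
  · simp [hNj]
  have hvj : v ∉ C j := fun h => Finset.disjoint_left.mp (hdisj i j hij) hv h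
  obtain ⟨w₀, hw₀⟩ := Finset.card_pos.mp (Nat.pos_of_ne_zero hNj)
  have hw₀j : w₀ ∈ C j := (Finset.mem_filter.mp hw₀).1
  have hadj₀ : G.Adj v w₀ := (Finset.mem_filter.mp hw₀).2
  have hNj1 : nbrsIn G (C j) v = {w₀} := by
    apply Finset.eq_singleton_iff_unique_mem.mpr
    refine ⟨hw₀, ?_⟩
    intro w₁ hw₁
    by_contra hne
    have hw₁j : w₁ ∈ C j := (Finset.mem_filter.mp hw₁).1
    have hadj₁ : G.Adj v w₁ := (Finset.mem_filter.mp hw₁).2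
    obtain ⟨wk, hwk⟩ := hconnC j w₁ hw₁j w₀ hw₀j
    have hq_path : wk.bypass.IsPath := Walk.bypass_isPath wk
    have hq_supp : ∀ z ∈ wk.bypass.support, z ∈ C j :=
      fun z hz => hwk z (Walk.support_bypass_subset wk hz)
    have hvq : v ∉ wk.bypass.support := fun h => hvj (hq_supp v h)
    set P1 : G.Path v w₀ := SimpleGraph.Path.singleton hadj₀ with hP1
    set P2 : G.Path v w₀ := ⟨Walk.cons hadj₁ wk.bypass,
      (Walk.cons_isPath_iff _ _).mpr ⟨hq_path, hvq⟩⟩ with hP2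
    have hPeq : P1 = P2 := isAcyclic_iff_path_unique.mp hacyc P1 P2
    have hsupp : (P1 : G.Walk v w₀).support = (P2 : G.Walk v w₀).support := by rw [hPeq]
    have hw₁mem : w₁ ∈ (P2 : G.Walk v w₀).support := by
      simp [hP2, Walk.support_cons]
    rw [← hsupp] at hw₁mem
    simp only [hP1, SimpleGraph.Path.singleton, Walk.support_cons, Walk.support_nil,
      List.mem_cons, List.mem_singleton] at hw₁mem
    rcases hw₁mem with h | h | h
    · exact hvj (h ▸ hw₁j)
    · exact hne h
    · exact absurd h List.not_mem_nil
  rw [hNj1, Finset.card_singleton, one_mul]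
  set N := nbrsIn G (C i) v with hN
  have hNpos : 0 < N.card := by
    obtain ⟨y, hy, hyne⟩ := Finset.exists_mem_ne
      (show 1 < (C i).card by have := hcard i; omega) v
    obtain ⟨wvy, hwvy⟩ := hconnC i v hv y hy
    cases wvy with
    | nil => exact absurd rfl hyne
    | @cons _ u _ h q =>
      refine Finset.card_pos.mpr ⟨u, Finset.mem_filter.mpr ⟨?_, h⟩⟩
      exact hwvy u (by simp [Walk.support_cons, q.start_mem_support])
  by_contra hcon
  push_neg at hcon
  set E := (C i).erase v with hE
  have hEcard : E.card = (C i).card - 1 := Finset.card_erase_of_mem hv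
  set K : V → Finset V := fun y => E.filter (fun x => ReachIn G E y x) with hK
  have hfirsthit : ∀ (x vv : V) (wxv : G.Walk x vv), v = vv →
      (∀ z ∈ wxv.support, z ∈ C i) → x ≠ v → ∃ y ∈ N, ReachIn G E x y := by
    intro x vv wxv
    induction wxv with
    | nil => intro hvv _ hxv; exact absurd hvv.symm hxv
    | @cons aa bb cc hxu q ih =>
      intro hvv hsupp hxv
      subst hvv
      have hxE : aa ∈ E := Finset.mem_erase.mpr ⟨hxv, hsupp aa (by simp)⟩
      by_cases huv : bb = v
      · subst huv
        refine ⟨aa, ?_, reachIn_refl hxE⟩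
        exact Finset.mem_filter.mpr ⟨hsupp aa (by simp), hxu.symm⟩
      · have hsub : ∀ z ∈ q.support, z ∈ C i :=
          fun z hz => hsupp z (by simp [Walk.support_cons, hz])
        obtain ⟨y, hyN, hrr⟩ := ih rfl hsub huv
        have huE : bb ∈ E := Finset.mem_erase.mpr ⟨huv, hsub bb q.start_mem_support⟩
        exact ⟨y, hyN, (reachIn_adj hxu hxE huE).trans hrr⟩
  have hcoverE : ∀ x ∈ E, ∃ y ∈ N, x ∈ K y := by
    intro x hx
    obtain ⟨hxne, hxi⟩ := Finset.mem_erase.mp hx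
    obtain ⟨wxv, hwxv⟩ := hconnC i x hxi v hv
    obtain ⟨y, hyN, hrr⟩ := hfirsthit x v wxv rfl hwxv hxne
    exact ⟨y, hyN, Finset.mem_filter.mpr ⟨hx, hrr.symm⟩⟩
  have hEsub : E ⊆ N.biUnion K := by
    intro x hx
    obtain ⟨y, hy, hk⟩ := hcoverE x hx
    exact Finset.mem_biUnion.mpr ⟨y, hy, hk⟩
  obtain ⟨ystar, hystar, hmax⟩ := N.exists_max_image (fun y => (K y).card)
    (Finset.card_pos.mp hNpos)
  have hsum : E.card ≤ N.card * (K ystar).card := by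
    calc E.card ≤ (N.biUnion K).card := Finset.card_le_card hEsub
      _ ≤ ∑ y ∈ N, (K y).card := Finset.card_biUnion_le
      _ ≤ N.card • (K ystar).card := Finset.sum_le_card_nsmul _ _ _ (fun y hy => hmax y hy)
      _ = N.card * (K ystar).card := by rw [smul_eq_mul]
  set A := K ystar with hA
  have hAsubE : A ⊆ E := Finset.filter_subset _ _
  have hAsubC : A ⊆ C i := hAsubE.trans (Finset.erase_subset _ _)
  have hvA : v ∉ A := fun h => (Finset.mem_erase.mp (hAsubE h)).1 rfl
  have hystarE : ystar ∈ E := by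
    have h1 := Finset.mem_filter.mp hystar
    exact Finset.mem_erase.mpr ⟨h1.2.ne', h1.1⟩
  have hystarA : ystar ∈ A := Finset.mem_filter.mpr ⟨hystarE, reachIn_refl hystarE⟩
  have hm_gt : (C j).card < A.card := by
    have h1 : (C i).card - 1 ≤ N.card * A.card := hEcard ▸ hsum
    have h2 : N.card * (C j).card < N.card * A.card := by omega
    exact lt_of_mul_lt_mul_left h2 (Nat.zero_le N.card)
  have hAclosed : ∀ x ∈ A, ∀ z, ReachIn G E x z → z ∈ A := by
    intro x hx z hz
    have h1 : ReachIn G E ystar x := (Finset.mem_filter.mp hx).2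
    exact Finset.mem_filter.mpr ⟨hz.mem_right, h1.trans hz⟩
  have hAconn : ∀ x ∈ A, ReachIn G A ystar x := by
    intro x hx
    obtain ⟨wk, hwk⟩ := (Finset.mem_filter.mp hx).2
    refine ⟨wk, fun z hz => ?_⟩
    exact hAclosed ystar hystarA z (reachIn_of_walk_support hwk z hz)
  set X := C i \ A with hX
  have hvX : v ∈ X := Finset.mem_sdiff.mpr ⟨hv, hvA⟩
  have hXreach : ∀ x ∈ X, ReachIn G X x v := by
    intro x hx
    obtain ⟨hxi, hxA⟩ := Finset.mem_sdiff.mp hx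
    by_cases hxv : x = v
    · subst hxv; exact reachIn_refl hvX
    · obtain ⟨wxv, hwxv⟩ := hconnC i x hxi v hv
      obtain ⟨y, hyN, hrr⟩ := hfirsthit x v wxv rfl hwxv hxv
      obtain ⟨wk, hwk⟩ := hrr
      have hnoA : ∀ z ∈ wk.support, z ∉ A := by
        intro z hz hzA
        exact hxA (hAclosed z hzA x (reachIn_of_walk_support hwk z hz).symm)
      have hsubX : ∀ z ∈ wk.support, z ∈ X := fun z hz =>
        Finset.mem_sdiff.mpr ⟨(Finset.erase_subset _ _) (hwk z hz), hnoA z hz⟩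
      have h2 : ReachIn G X x y := ⟨wk, hsubX⟩
      have hyX : y ∈ X := h2.mem_right
      have hyadj : G.Adj y v := ((Finset.mem_filter.mp hyN).2).symm
      exact h2.trans (reachIn_adj hyadj hyX hvX)
  set Cj' := C j ∪ X with hCj'
  set C' : Fin k → Finset V := fun l => if l = i then A else if l = j then Cj' else C l with hC'
  have hdisjXj : Disjoint (C j) X := (hdisj j i hij.symm).mono_right sdiff_subset
  have hXcard : X.card = (C i).card - A.card := Finset.card_sdiff_of_subset hAsubC
  have hCj'card : Cj'.card = (C j).card + X.card := Finset.card_union_of_disjoint hdisjXj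
  have hC'i : C' i = A := by simp [hC']
  have hC'j : C' j = Cj' := by simp [hC', hij.symm]
  have hC'other : ∀ l, l ≠ i → l ≠ j → C' l = C l := by
    intro l h1 h2; simp [hC', h1, h2]
  have horig : ∀ l x, x ∈ C' l → x ∈ C l ∨ (l = j ∧ x ∈ C i) := by
    intro l x hx
    by_cases h1 : l = i
    · subst h1; rw [hC'i] at hx; exact Or.inl (hAsubC hx)
    · by_cases h2 : l = j
      · subst h2; rw [hC'j] at hx
        rcases Finset.mem_union.mp hx with h | h
        · exact Or.inl h
        · exact Or.inr ⟨rfl, (Finset.mem_sdiff.mp h).1⟩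
      · rw [hC'other l h1 h2] at hx; exact Or.inl hx
  have huniq : ∀ x l1 l2, x ∈ C l1 → x ∈ C l2 → l1 = l2 := by
    intro x l1 l2 h1 h2
    by_contra hne
    exact Finset.disjoint_left.mp (hdisj l1 l2 hne) h1 h2
  have hFC' : F C' := by
    refine ⟨?_, ?_, ?_, ?_⟩
    · intro l
      by_cases h1 : l = i
      · rw [h1, hC'i]; have := hcard j; omega
      · by_cases h2 : l = j
        · rw [h2, hC'j]
          exact le_trans (hcard j) (Finset.card_le_card Finset.subset_union_left)
        · rw [hC'other l h1 h2]; exact hcard l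
    · intro l1 l2 hne
      refine Finset.disjoint_left.mpr ?_
      intro x hx1 hx2
      rcases horig l1 x hx1 with ho1 | ⟨he1, hoi1⟩
      · rcases horig l2 x hx2 with ho2 | ⟨he2, hoi2⟩
        · exact hne (huniq x l1 l2 ho1 ho2)
        · have hl1 : l1 = i := huniq x l1 i ho1 hoi2
          rw [hl1, hC'i] at hx1
          rw [he2, hC'j] at hx2
          rcases Finset.mem_union.mp hx2 with h | h
          · exact Finset.disjoint_left.mp (hdisj i j hij) hoi2 h
          · exact (Finset.mem_sdiff.mp h).2 hx1
      · rcases horig l2 x hx2 with ho2 | ⟨he2, hoi2⟩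
        · have hl2 : l2 = i := huniq x l2 i ho2 hoi1
          rw [hl2, hC'i] at hx2
          rw [he1, hC'j] at hx1
          rcases Finset.mem_union.mp hx1 with h | h
          · exact Finset.disjoint_left.mp (hdisj i j hij) hoi1 h
          · exact (Finset.mem_sdiff.mp h).2 hx2
        · exact hne (he1.trans he2.symm)
    · intro x
      obtain ⟨l, hl⟩ := hcover x
      by_cases h1 : l = i
      · by_cases hxA : x ∈ A
        · exact ⟨i, by rw [hC'i]; exact hxA⟩
        · refine ⟨j, ?_⟩
          rw [hC'j]
          exact Finset.mem_union_right _ (Finset.mem_sdiff.mpr ⟨h1 ▸ hl, hxA⟩)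
      · by_cases h2 : l = j
        · refine ⟨j, ?_⟩
          rw [hC'j]
          exact Finset.mem_union_left _ (h2 ▸ hl)
        · exact ⟨l, by rw [hC'other l h1 h2]; exact hl⟩
    · intro l x hx y hy
      by_cases h1 : l = i
      · rw [h1, hC'i] at hx hy ⊢
        exact (hAconn x hx).symm.trans (hAconn y hy)
      · by_cases h2 : l = j
        · rw [h2, hC'j] at hx hy ⊢
          have hto : ∀ z ∈ Cj', ReachIn G Cj' z v := by
            intro z hz
            rcases Finset.mem_union.mp hz with h | h
            · exact ((hconnC j z h w₀ hw₀j).mono Finset.subset_union_left).trans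
                (reachIn_adj hadj₀.symm (Finset.mem_union_left _ hw₀j)
                  (Finset.mem_union_right _ hvX))
            · exact (hXreach z h).mono Finset.subset_union_right
          exact (hto x hx).trans (hto y hy).symm
        · rw [hC'other l h1 h2] at hx hy ⊢
          exact hconnC l x hx y hy
  -- potential strictly decreases: contradiction with minimality
  have hsplit : ∀ D : Fin k → Finset V, ∑ l, (D l).card ^ 2
      = (D i).card ^ 2 + (D j).card ^ 2 + ∑ l ∈ (univ.erase i).erase j, (D l).card ^ 2 := by
    intro D
    rw [← Finset.sum_erase_add _ _ (Finset.mem_univ i),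
      ← Finset.sum_erase_add _ _ (Finset.mem_erase.mpr ⟨hij.symm, Finset.mem_univ j⟩)]
    ring
  have hΦlt : ∑ l, (C' l).card ^ 2 < ∑ l, (C l).card ^ 2 := by
    rw [hsplit C, hsplit C']
    have hrest : ∑ l ∈ (univ.erase i).erase j, (C' l).card ^ 2
        = ∑ l ∈ (univ.erase i).erase j, (C l).card ^ 2 := by
      refine Finset.sum_congr rfl (fun l hl => ?_)
      obtain ⟨hlj, hli, _⟩ : l ≠ j ∧ l ≠ i ∧ l ∈ univ := by
        obtain ⟨h1, h2⟩ := Finset.mem_erase.mp hl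
        obtain ⟨h3, h4⟩ := Finset.mem_erase.mp h2
        exact ⟨h1, h3, h4⟩
      rw [hC'other l hli hlj]
    rw [hrest, hC'i, hC'j, hCj'card]
    have hAle : A.card ≤ (C i).card := Finset.card_le_card hAsubC
    have hXpos : 0 < X.card := Finset.card_pos.mpr ⟨v, hvX⟩
    have hsum2 : A.card + X.card = (C i).card := by omega
    have hmgt := hm_gt
    nlinarith [hmgt, hXpos, hsum2]
  exact absurd (hmin C' hFC') (not_le.mpr hΦlt)

lemma comm_to_matching (G : SimpleGraph V) [DecidableRel G.Adj] (hconn : G.Connected)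
    {k : ℕ} (C : Fin k → Finset V) (hC : IsKComm G C) : HasMatchingOfSize G k := by
  classical
  obtain ⟨hcard, hdisj, hcover, hineq⟩ := hC
  have hedge : ∀ i, ∃ pq : V × V, pq.1 ∈ C i ∧ pq.2 ∈ C i ∧ G.Adj pq.1 pq.2 := by
    intro i
    have h2 := hcard i
    obtain ⟨v, hv⟩ := Finset.card_pos.mp (show 0 < (C i).card by omega)
    obtain ⟨u, hu, hune⟩ := Finset.exists_mem_ne
      (show 1 < (C i).card by omega) v
    obtain ⟨wk⟩ := hconn v u
    cases wk with
    | nil => exact absurd rfl hune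
    | @cons _ z _ hadj q =>
      obtain ⟨l, hl⟩ := hcover z
      by_cases hli : l = i
      · exact ⟨(v, z), hv, hli ▸ hl, hadj⟩
      · have hkey := hineq i l (fun h => hli h.symm) v hv
        have hzl : z ∈ nbrsIn G (C l) v := Finset.mem_filter.mpr ⟨hl, hadj⟩
        have h1 : 1 ≤ (nbrsIn G (C l) v).card := Finset.card_pos.mpr ⟨z, hzl⟩
        have hdpos : 0 < (nbrsIn G (C i) v).card := by
          rcases Nat.eq_zero_or_pos (nbrsIn G (C i) v).card with h0 | h0
          · exfalso
            rw [h0, Nat.zero_mul] at hkey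
            have hmul : 1 * 1 ≤ (nbrsIn G (C l) v).card * ((C i).card - 1) :=
              Nat.mul_le_mul h1 (show (1:ℕ) ≤ (C i).card - 1 by omega)
            omega
          · exact h0
        obtain ⟨y, hy⟩ := Finset.card_pos.mp hdpos
        exact ⟨(v, y), hv, (Finset.mem_filter.mp hy).1, (Finset.mem_filter.mp hy).2⟩
  choose pq hpq1 hpq2 hpqadj using hedge
  refine ⟨Finset.univ.image (fun i => s((pq i).1, (pq i).2)), ?_, ?_, ?_⟩
  · have hinj : Set.InjOn (fun i => s((pq i).1, (pq i).2)) ↑(Finset.univ : Finset (Fin k)) := by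
      intro i _ j _ hsij
      by_contra hne
      have h1 : (pq i).1 ∈ s((pq j).1, (pq j).2) := by
        rw [← show s((pq i).1, (pq i).2) = s((pq j).1, (pq j).2) from hsij]
        exact Sym2.mem_mk_left _ _
      rw [Sym2.mem_iff] at h1
      have hmem : (pq i).1 ∈ C j := h1.elim (fun h => h ▸ hpq1 j) (fun h => h ▸ hpq2 j)
      exact Finset.disjoint_left.mp (hdisj i j hne) (hpq1 i) hmem
    rw [Finset.card_image_of_injOn hinj, Finset.card_univ, Fintype.card_fin]
  · intro e he
    obtain ⟨i, _, rfl⟩ := Finset.mem_image.mp he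
    exact hpqadj i
  · intro e he f hf hef xx hxe hxf
    obtain ⟨i, _, rfl⟩ := Finset.mem_image.mp he
    obtain ⟨j, _, rfl⟩ := Finset.mem_image.mp hf
    have hij : i ≠ j := fun h => hef (by rw [h])
    rw [Sym2.mem_iff] at hxe hxf
    have h1 : xx ∈ C i := hxe.elim (fun h => h ▸ hpq1 i) (fun h => h ▸ hpq2 i)
    have h2 : xx ∈ C j := hxf.elim (fun h => h ▸ hpq1 j) (fun h => h ▸ hpq2 j)
    exact Finset.disjoint_left.mp (hdisj i j hij) h1 h2

end Main

/-- A tree admits a `k`-community structure if and only if it contains a matching of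
size `k`; moreover, in that case it admits a connected `k`-community structure. -/
theorem stmt_14 {V : Type*} [Fintype V] [DecidableEq V] (G : SimpleGraph V)
    [DecidableRel G.Adj] (htree : G.IsTree) {k : ℕ} (hk : 2 ≤ k) :
    ((∃ C : Fin k → Finset V, IsKComm G C) ↔ HasMatchingOfSize G k) ∧
    (HasMatchingOfSize G k → ∃ C : Fin k → Finset V, IsKComm G C ∧
      ∀ i, (G.induce (↑(C i) : Set V)).Connected) := by
  have hconn : G.Connected := htree.1
  have h1k : 1 ≤ k := by omega
  constructor
  · constructor
    · rintro ⟨C, hC⟩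
      exact comm_to_matching G hconn C hC
    · intro hm
      obtain ⟨C, hC, _⟩ := exists_conn_comm G htree h1k hm
      exact ⟨C, hC⟩
  · intro hm
    exact exists_conn_comm G htree h1k hm
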